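/- arXiv:2003.09918 — 2 statements merged into one kernel-verified Lean document; each statement's English description precedes it below -/
import Mathlib

section
/- For all natural numbers a ≥ b, all ptSTL formulas φ₁ and φ₂, every signal (x,u) and every time k with k ≥ a: ((x,u),k) ⊨ φ₁ S_{[a,b]} φ₂ if and only if there exists n with b ≤ n ≤ a such that ((x,u),k) ⊨ Xⁿφ₂ and ((x,u),k) ⊨ G⁻_{[n,b]} φ₁. In other words, the bounded since operator is expressible via X and G⁻: φ₁ S_{[a,b]} φ₂ is semantically equivalent at times k ≥ a to the finite disjunction ⋁_{n=b}^{a} (Xⁿφ₂ ∧ G⁻_{[n,b]} φ₁). -/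
/-- ptSTL formulas over `n` state variables and `m` control variables. -/
inductive ptSTL (n m : ℕ) : Type
  | top : ptSTL n m
  | gt (i : Fin n) (c : ℝ) : ptSTL n m
  | lt (i : Fin n) (c : ℝ) : ptSTL n m
  | ctrl (j : Fin m) (c : ℝ) : ptSTL n m
  | not (φ : ptSTL n m) : ptSTL n m
  | and (φ₁ φ₂ : ptSTL n m) : ptSTL n m
  | or (φ₁ φ₂ : ptSTL n m) : ptSTL n m
  | since (a b : ℕ) (φ₁ φ₂ : ptSTL n m) : ptSTL n m
  | F (a b : ℕ) (φ : ptSTL n m) : ptSTL n m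
  | G (a b : ℕ) (φ : ptSTL n m) : ptSTL n m
  | X (φ : ptSTL n m) : ptSTL n m

/-- Satisfaction of a ptSTL formula by a signal `(x, u)` at time `k`
(natural subtraction truncates the windows at time 0). -/
def Sat {n m : ℕ} (x : ℕ → Fin n → ℝ) (u : ℕ → Fin m → ℝ) : ℕ → ptSTL n m → Prop
  | _, .top => True
  | k, .gt i c => x k i > c
  | k, .lt i c => x k i < c
  | k, .ctrl j c => u k j = c
  | k, .not φ => ¬ Sat x u k φ
  | k, .and φ₁ φ₂ => Sat x u k φ₁ ∧ Sat x u k φ₂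
  | k, .or φ₁ φ₂ => Sat x u k φ₁ ∨ Sat x u k φ₂
  | k, .since a b φ₁ φ₂ => ∃ t, k - a ≤ t ∧ t ≤ k - b ∧ Sat x u t φ₂ ∧
      ∀ s, t ≤ s → s ≤ k - b → Sat x u s φ₁
  | k, .F a b φ => ∃ t, k - a ≤ t ∧ t ≤ k - b ∧ Sat x u t φ
  | k, .G a b φ => ∀ t, k - a ≤ t → t ≤ k - b → Sat x u t φ
  | k, .X φ => 1 ≤ k ∧ Sat x u (k - 1) φ

/-- `Xpow N φ` is the `N`-fold previous-step operator applied to `φ`. -/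
def Xpow {n m : ℕ} : ℕ → ptSTL n m → ptSTL n m
  | 0, φ => φ
  | N + 1, φ => .X (Xpow N φ)

/-- A trace of the system `x_{k+1} = f(x_k, u_k, w_k)` with control set `U` and
disturbance set `W`. -/
def IsTrace {n m l : ℕ} (f : (Fin n → ℝ) → (Fin m → ℝ) → (Fin l → ℝ) → (Fin n → ℝ))
    (W : Set (Fin l → ℝ)) (U : Set (Fin m → ℝ))
    (x : ℕ → Fin n → ℝ) (u : ℕ → Fin m → ℝ) : Prop :=
  (∀ k, u k ∈ U) ∧ ∀ k, ∃ w ∈ W, x (k + 1) = f (x k) (u k) w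

/-- A formula `Φ` is controllable for the system: at every time `k` there is a control
sequence (with values in `U` on `0,…,k`) such that every trace agreeing with it on
`0,…,k` violates `Φ` at time `k`. -/
def Controllable {n m l : ℕ} (f : (Fin n → ℝ) → (Fin m → ℝ) → (Fin l → ℝ) → (Fin n → ℝ))
    (W : Set (Fin l → ℝ)) (U : Set (Fin m → ℝ)) (Φ : ptSTL n m) : Prop :=
  ∀ k : ℕ, ∃ v : ℕ → Fin m → ℝ, (∀ t ≤ k, v t ∈ U) ∧
    ∀ x u, IsTrace f W U x u → (∀ t ≤ k, u t = v t) → ¬ Sat x u k Φ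


lemma Sat_Xpow {n m : ℕ} (x : ℕ → Fin n → ℝ) (u : ℕ → Fin m → ℝ) (φ : ptSTL n m) :
    ∀ N k, Sat x u k (Xpow N φ) ↔ N ≤ k ∧ Sat x u (k - N) φ := by
  intro N
  induction N with
  | zero => intro k; simp [Xpow]
  | succ N ih =>
    intro k
    simp only [Xpow, Sat, ih]
    constructor
    · rintro ⟨h1, h2, h3⟩
      refine ⟨by omega, by rwa [show k - 1 - N = k - (N+1) by omega] at h3⟩
    · rintro ⟨h1, h2⟩
      exact ⟨by omega, by omega, by rwa [show k - 1 - N = k - (N+1) by omega]⟩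

/-- at times `k ≥ a`, `φ₁ S_{[a,b]} φ₂` holds iff there is `N` with
`b ≤ N ≤ a` such that `X^N φ₂` and `G⁻_{[N,b]} φ₁` hold. -/
theorem since_eq_disj_Xpow_G {n m : ℕ} (a b : ℕ) (hab : b ≤ a) (φ₁ φ₂ : ptSTL n m)
    (x : ℕ → Fin n → ℝ) (u : ℕ → Fin m → ℝ) (k : ℕ) (hk : a ≤ k) :
    Sat x u k (.since a b φ₁ φ₂) ↔
      ∃ N, b ≤ N ∧ N ≤ a ∧ Sat x u k (Xpow N φ₂) ∧ Sat x u k (.G N b φ₁) := by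
  simp only [Sat]
  constructor
  · rintro ⟨t, h1, h2, h3, h4⟩
    refine ⟨k - t, by omega, by omega, ?_, ?_⟩
    · rw [Sat_Xpow]; exact ⟨by omega, by rwa [show k - (k - t) = t by omega]⟩
    · intro s hs1 hs2; exact h4 s (by omega) hs2
  · rintro ⟨N, h1, h2, h3, h4⟩
    rw [Sat_Xpow] at h3
    exact ⟨k - N, by omega, by omega, h3.2, fun s hs1 hs2 => h4 s hs1 hs2⟩
end

section
/- Every ptSTL formula φ admits a conjunctive normal form over shifted atoms: there exist a natural number h, a positive integer z, and formulas φ₁,…,φ_z, each of which is a nonempty finite disjunction of formulas of the form Xⁿα or Xⁿ¬α where α is an atomic formula (⊤, x^i > c, x^i < c, or u^j = c), such that for every signal (x,u) and every time k ≥ h: ((x,u),k) ⊨ φ if and only if ((x,u),k) ⊨ φ₁ ∧ … ∧ φ_z. -/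
/-- An atomic formula: `⊤`, `x^i > c`, `x^i < c`, or `u^j = c`. -/
def IsAtomicFormula {n m : ℕ} (φ : ptSTL n m) : Prop :=
  φ = .top ∨ (∃ i c, φ = .gt i c) ∨ (∃ i c, φ = .lt i c) ∨ (∃ j c, φ = .ctrl j c)

/-- A shifted literal: `Xⁿα` or `Xⁿ¬α` for an atomic formula `α`. -/
def IsLiteral {n m : ℕ} (φ : ptSTL n m) : Prop :=
  ∃ (N : ℕ) (α : ptSTL n m), IsAtomicFormula α ∧ (φ = Xpow N α ∨ φ = Xpow N (.not α))

/-- A clause: a nonempty finite disjunction of shifted literals. -/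
inductive IsClause {n m : ℕ} : ptSTL n m → Prop
  | lit {φ} : IsLiteral φ → IsClause φ
  | or {φ₁ φ₂} : IsClause φ₁ → IsClause φ₂ → IsClause (.or φ₁ φ₂)

/-- A CNF formula: a nonempty finite conjunction `φ₁ ∧ … ∧ φ_z` of clauses. -/
inductive IsCNF {n m : ℕ} : ptSTL n m → Prop
  | clause {φ} : IsClause φ → IsCNF φ
  | and {φ₁ φ₂} : IsCNF φ₁ → IsCNF φ₂ → IsCNF (.and φ₁ φ₂)

section Aux

variable {n m : ℕ}

/-- Boolean combinations of shifted literals. -/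
inductive IsBool {n m : ℕ} : ptSTL n m → Prop
  | lit {φ} : IsLiteral φ → IsBool φ
  | not {φ} : IsBool φ → IsBool (.not φ)
  | and {φ₁ φ₂} : IsBool φ₁ → IsBool φ₂ → IsBool (.and φ₁ φ₂)
  | or {φ₁ φ₂} : IsBool φ₁ → IsBool φ₂ → IsBool (.or φ₁ φ₂)

lemma sat_xpow (x : ℕ → Fin n → ℝ) (u : ℕ → Fin m → ℝ) (N : ℕ) (φ : ptSTL n m) :
    ∀ k, Sat x u k (Xpow N φ) ↔ N ≤ k ∧ Sat x u (k - N) φ := by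
  induction N with
  | zero => intro k; simp [Xpow]
  | succ N ih =>
    intro k
    show (1 ≤ k ∧ Sat x u (k-1) (Xpow N φ)) ↔ _
    rw [ih]
    constructor
    · rintro ⟨h1, h2, h3⟩
      refine ⟨by omega, ?_⟩
      have : k - 1 - N = k - (N+1) := by omega
      rwa [this] at h3
    · rintro ⟨h1, h3⟩
      refine ⟨by omega, by omega, ?_⟩
      have : k - 1 - N = k - (N+1) := by omega
      rwa [this]

/-- Pushing one `X` through a Boolean combination. -/
lemma shiftX {ψ : ptSTL n m} (hb : IsBool ψ) :
    ∃ χ : ptSTL n m, IsBool χ ∧ ∀ x u k, 1 ≤ k →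
      (Sat x u k (.X ψ) ↔ Sat x u k χ) := by
  induction hb with
  | @lit φ hl =>
    refine ⟨.X φ, ?_, fun x u k _ => Iff.rfl⟩
    obtain ⟨N, α, hα, hc⟩ := hl
    refine IsBool.lit ⟨N+1, α, hα, ?_⟩
    rcases hc with h | h <;> [left; right] <;> rw [h] <;> rfl
  | @not φ _ ih =>
    obtain ⟨χ, hχ, e⟩ := ih
    refine ⟨.not χ, IsBool.not hχ, fun x u k hk => ?_⟩
    have := e x u k hk
    show (1 ≤ k ∧ ¬ Sat x u (k-1) φ) ↔ ¬ Sat x u k χ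
    rw [← this]
    show _ ↔ ¬ (1 ≤ k ∧ Sat x u (k-1) φ)
    constructor
    · rintro ⟨_, h⟩ ⟨_, h'⟩; exact h h'
    · intro h; exact ⟨hk, fun h' => h ⟨hk, h'⟩⟩
  | @and φ₁ φ₂ _ _ ih₁ ih₂ =>
    obtain ⟨χ₁, hχ₁, e₁⟩ := ih₁
    obtain ⟨χ₂, hχ₂, e₂⟩ := ih₂
    refine ⟨.and χ₁ χ₂, IsBool.and hχ₁ hχ₂, fun x u k hk => ?_⟩
    have h1 := e₁ x u k hk; have h2 := e₂ x u k hk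
    show (1 ≤ k ∧ Sat x u (k-1) φ₁ ∧ Sat x u (k-1) φ₂) ↔ Sat x u k χ₁ ∧ Sat x u k χ₂
    rw [← h1, ← h2]
    show _ ↔ (1 ≤ k ∧ Sat x u (k-1) φ₁) ∧ (1 ≤ k ∧ Sat x u (k-1) φ₂)
    tauto
  | @or φ₁ φ₂ _ _ ih₁ ih₂ =>
    obtain ⟨χ₁, hχ₁, e₁⟩ := ih₁
    obtain ⟨χ₂, hχ₂, e₂⟩ := ih₂
    refine ⟨.or χ₁ χ₂, IsBool.or hχ₁ hχ₂, fun x u k hk => ?_⟩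
    have h1 := e₁ x u k hk; have h2 := e₂ x u k hk
    show (1 ≤ k ∧ (Sat x u (k-1) φ₁ ∨ Sat x u (k-1) φ₂)) ↔ Sat x u k χ₁ ∨ Sat x u k χ₂
    rw [← h1, ← h2]
    show _ ↔ (1 ≤ k ∧ Sat x u (k-1) φ₁) ∨ (1 ≤ k ∧ Sat x u (k-1) φ₂)
    tauto

/-- Shifting a Boolean combination back `j` steps. -/
lemma shiftN {ψ : ptSTL n m} (hb : IsBool ψ) (j : ℕ) :
    ∃ χ : ptSTL n m, IsBool χ ∧ ∀ x u k, j ≤ k →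
      (Sat x u k χ ↔ Sat x u (k - j) ψ) := by
  induction j with
  | zero => exact ⟨ψ, hb, fun x u k _ => by simp⟩
  | succ j ih =>
    obtain ⟨χ, hχ, e⟩ := ih
    obtain ⟨χ', hχ', e'⟩ := shiftX hχ
    refine ⟨χ', hχ', fun x u k hk => ?_⟩
    rw [← e' x u k (by omega)]
    show (1 ≤ k ∧ Sat x u (k-1) χ) ↔ _
    rw [e x u (k-1) (by omega)]
    have : k - 1 - j = k - (j+1) := by omega
    rw [this]
    exact ⟨fun h => h.2, fun h => ⟨by omega, h⟩⟩

/-- Disjunction over the window `[b, b+d]` of shifts. -/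
lemma orRange (φ ψ : ptSTL n m) (h₁ : ℕ) (hb : IsBool ψ)
    (e : ∀ x u k, h₁ ≤ k → (Sat x u k φ ↔ Sat x u k ψ)) (d b : ℕ) :
    ∃ (h : ℕ) (χ : ptSTL n m), IsBool χ ∧ ∀ x u k, h ≤ k →
      (Sat x u k χ ↔ ∃ j, b ≤ j ∧ j ≤ b + d ∧ Sat x u (k - j) φ) := by
  induction d with
  | zero =>
    obtain ⟨χ, hχ, eχ⟩ := shiftN hb b
    refine ⟨h₁ + b, χ, hχ, fun x u k hk => ?_⟩
    rw [eχ x u k (by omega), ← e x u (k-b) (by omega)]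
    constructor
    · intro h; exact ⟨b, le_refl _, by omega, h⟩
    · rintro ⟨j, hj1, hj2, hj3⟩
      have : j = b := by omega
      rwa [this] at hj3
  | succ d ih =>
    obtain ⟨h, χ, hχ, eχ⟩ := ih
    obtain ⟨χ', hχ', eχ'⟩ := shiftN hb (b + d + 1)
    refine ⟨max h (h₁ + (b + d + 1)), .or χ χ', IsBool.or hχ hχ', fun x u k hk => ?_⟩
    show Sat x u k χ ∨ Sat x u k χ' ↔ _
    rw [eχ x u k (by omega), eχ' x u k (by omega),
        ← e x u (k - (b + d + 1)) (by omega)]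
    constructor
    · rintro (⟨j, hj1, hj2, hj3⟩ | hs)
      · exact ⟨j, hj1, by omega, hj3⟩
      · exact ⟨b + d + 1, by omega, by omega, hs⟩
    · rintro ⟨j, hj1, hj2, hj3⟩
      by_cases hj : j ≤ b + d
      · exact Or.inl ⟨j, hj1, hj, hj3⟩
      · right; have hje : j = b + d + 1 := by omega
        rwa [hje] at hj3


/-- Conjunction over the window `[b, b+d]` of shifts. -/
lemma andRange (φ ψ : ptSTL n m) (h₁ : ℕ) (hb : IsBool ψ)
    (e : ∀ x u k, h₁ ≤ k → (Sat x u k φ ↔ Sat x u k ψ)) (d b : ℕ) :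
    ∃ (h : ℕ) (χ : ptSTL n m), IsBool χ ∧ ∀ x u k, h ≤ k →
      (Sat x u k χ ↔ ∀ i, b ≤ i → i ≤ b + d → Sat x u (k - i) φ) := by
  induction d with
  | zero =>
    obtain ⟨χ, hχ, eχ⟩ := shiftN hb b
    refine ⟨h₁ + b, χ, hχ, fun x u k hk => ?_⟩
    rw [eχ x u k (by omega), ← e x u (k-b) (by omega)]
    constructor
    · intro h i hi1 hi2
      have : i = b := by omega
      rwa [this]
    · intro h; exact h b (le_refl _) (by omega)
  | succ d ih =>
    obtain ⟨h, χ, hχ, eχ⟩ := ih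
    obtain ⟨χ', hχ', eχ'⟩ := shiftN hb (b + d + 1)
    refine ⟨max h (h₁ + (b + d + 1)), .and χ χ', IsBool.and hχ hχ', fun x u k hk => ?_⟩
    show Sat x u k χ ∧ Sat x u k χ' ↔ _
    rw [eχ x u k (by omega), eχ' x u k (by omega),
        ← e x u (k - (b + d + 1)) (by omega)]
    constructor
    · rintro ⟨h1, h2⟩ i hi1 hi2
      by_cases hi : i ≤ b + d
      · exact h1 i hi1 hi
      · have : i = b + d + 1 := by omega
        rwa [this]
    · intro h
      exact ⟨fun i hi1 hi2 => h i hi1 (by omega), h (b+d+1) (by omega) (le_refl _)⟩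

/-- Disjunction over `j ∈ [b, b+d]` of `φ₂` at `k-j` together with `φ₁` on `[b, j]`. -/
lemma sinceRange (φ₁ φ₂ ψ₁ ψ₂ : ptSTL n m) (h₁ h₂ : ℕ) (hb₁ : IsBool ψ₁) (hb₂ : IsBool ψ₂)
    (e₁ : ∀ x u k, h₁ ≤ k → (Sat x u k φ₁ ↔ Sat x u k ψ₁))
    (e₂ : ∀ x u k, h₂ ≤ k → (Sat x u k φ₂ ↔ Sat x u k ψ₂)) (d b : ℕ) :
    ∃ (h : ℕ) (χ : ptSTL n m), IsBool χ ∧ ∀ x u k, h ≤ k →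
      (Sat x u k χ ↔ ∃ j, b ≤ j ∧ j ≤ b + d ∧ Sat x u (k - j) φ₂ ∧
        ∀ i, b ≤ i → i ≤ j → Sat x u (k - i) φ₁) := by
  induction d with
  | zero =>
    obtain ⟨χ₂, hχ₂, eχ₂⟩ := shiftN hb₂ b
    obtain ⟨χ₁, hχ₁, eχ₁⟩ := shiftN hb₁ b
    refine ⟨max h₁ h₂ + b, .and χ₂ χ₁, IsBool.and hχ₂ hχ₁, fun x u k hk => ?_⟩
    show Sat x u k χ₂ ∧ Sat x u k χ₁ ↔ _
    rw [eχ₂ x u k (by omega), eχ₁ x u k (by omega),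
        ← e₂ x u (k-b) (by omega), ← e₁ x u (k-b) (by omega)]
    constructor
    · rintro ⟨s2, s1⟩
      refine ⟨b, le_refl _, by omega, s2, fun i hi1 hi2 => ?_⟩
      have : i = b := by omega
      rwa [this]
    · rintro ⟨j, hj1, hj2, hj3, hj4⟩
      have : j = b := by omega
      subst this
      exact ⟨hj3, hj4 j (le_refl _) (le_refl _)⟩
  | succ d ih =>
    obtain ⟨h, χ, hχ, eχ⟩ := ih
    obtain ⟨χ₂, hχ₂, eχ₂⟩ := shiftN hb₂ (b + d + 1)
    obtain ⟨ha, χa, hχa, eχa⟩ := andRange φ₁ ψ₁ h₁ hb₁ e₁ (d+1) b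
    refine ⟨max h (max ha (h₂ + (b + d + 1))), .or χ (.and χ₂ χa),
      IsBool.or hχ (IsBool.and hχ₂ hχa), fun x u k hk => ?_⟩
    show Sat x u k χ ∨ (Sat x u k χ₂ ∧ Sat x u k χa) ↔ _
    rw [eχ x u k (by omega), eχ₂ x u k (by omega), eχa x u k (by omega),
        ← e₂ x u (k - (b + d + 1)) (by omega)]
    constructor
    · rintro (⟨j, hj1, hj2, hj3, hj4⟩ | ⟨s2, s1⟩)
      · exact ⟨j, hj1, by omega, hj3, hj4⟩
      · exact ⟨b + d + 1, by omega, by omega, s2,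
          fun i hi1 hi2 => s1 i hi1 (by omega)⟩
    · rintro ⟨j, hj1, hj2, hj3, hj4⟩
      by_cases hj : j ≤ b + d
      · exact Or.inl ⟨j, hj1, hj, hj3, hj4⟩
      · right
        have hje : j = b + d + 1 := by omega
        subst hje
        exact ⟨hj3, fun i hi1 hi2 => hj4 i hi1 (by omega)⟩

lemma atom_bool {φ : ptSTL n m} (h : IsAtomicFormula φ) : IsBool φ :=
  IsBool.lit ⟨0, φ, h, Or.inl rfl⟩

/-- Every formula is eventually equivalent to a Boolean combination of literals. -/
lemma exists_bool (φ : ptSTL n m) :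
    ∃ (h : ℕ) (ψ : ptSTL n m), IsBool ψ ∧ ∀ x u k, h ≤ k →
      (Sat x u k φ ↔ Sat x u k ψ) := by
  induction φ with
  | top => exact ⟨0, .top, atom_bool (Or.inl rfl), fun _ _ _ _ => Iff.rfl⟩
  | gt i c => exact ⟨0, .gt i c, atom_bool (Or.inr (Or.inl ⟨i, c, rfl⟩)), fun _ _ _ _ => Iff.rfl⟩
  | lt i c => exact ⟨0, .lt i c, atom_bool (Or.inr (Or.inr (Or.inl ⟨i, c, rfl⟩))), fun _ _ _ _ => Iff.rfl⟩
  | ctrl j c => exact ⟨0, .ctrl j c, atom_bool (Or.inr (Or.inr (Or.inr ⟨j, c, rfl⟩))), fun _ _ _ _ => Iff.rfl⟩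
  | not φ ih =>
    obtain ⟨h, ψ, hb, e⟩ := ih
    exact ⟨h, .not ψ, IsBool.not hb, fun x u k hk => not_congr (e x u k hk)⟩
  | and φ₁ φ₂ ih₁ ih₂ =>
    obtain ⟨h₁, ψ₁, hb₁, e₁⟩ := ih₁
    obtain ⟨h₂, ψ₂, hb₂, e₂⟩ := ih₂
    exact ⟨max h₁ h₂, .and ψ₁ ψ₂, IsBool.and hb₁ hb₂, fun x u k hk =>
      and_congr (e₁ x u k (by omega)) (e₂ x u k (by omega))⟩
  | or φ₁ φ₂ ih₁ ih₂ =>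
    obtain ⟨h₁, ψ₁, hb₁, e₁⟩ := ih₁
    obtain ⟨h₂, ψ₂, hb₂, e₂⟩ := ih₂
    exact ⟨max h₁ h₂, .or ψ₁ ψ₂, IsBool.or hb₁ hb₂, fun x u k hk =>
      or_congr (e₁ x u k (by omega)) (e₂ x u k (by omega))⟩
  | X φ ih =>
    obtain ⟨h, ψ, hb, e⟩ := ih
    obtain ⟨χ, hχ, eχ⟩ := shiftN hb 1
    refine ⟨h + 1, χ, hχ, fun x u k hk => ?_⟩
    rw [eχ x u k (by omega), ← e x u (k-1) (by omega)]
    show (1 ≤ k ∧ Sat x u (k-1) φ) ↔ _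
    exact ⟨fun h => h.2, fun h => ⟨by omega, h⟩⟩
  | F a b φ ih =>
    obtain ⟨h, ψ, hb, e⟩ := ih
    by_cases hab : b ≤ a
    · obtain ⟨h', χ, hχ, eχ⟩ := orRange φ ψ h hb e (a - b) b
      refine ⟨max h' a, χ, hχ, fun x u k hk => ?_⟩
      rw [eχ x u k (by omega)]
      show (∃ t, k - a ≤ t ∧ t ≤ k - b ∧ Sat x u t φ) ↔ _
      constructor
      · rintro ⟨t, ht1, ht2, ht3⟩
        refine ⟨k - t, by omega, by omega, ?_⟩
        have : k - (k - t) = t := by omega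
        rwa [this]
      · rintro ⟨j, hj1, hj2, hj3⟩
        exact ⟨k - j, by omega, by omega, hj3⟩
    · refine ⟨b, .not .top, IsBool.not (atom_bool (Or.inl rfl)), fun x u k hk => ?_⟩
      show (∃ t, k - a ≤ t ∧ t ≤ k - b ∧ Sat x u t φ) ↔ ¬ Sat x u k ptSTL.top
      show _ ↔ ¬ True
      simp only [not_true, iff_false]
      rintro ⟨t, ht1, ht2, _⟩
      omega
  | G a b φ ih =>
    obtain ⟨h, ψ, hb, e⟩ := ih
    by_cases hab : b ≤ a
    · obtain ⟨h', χ, hχ, eχ⟩ := andRange φ ψ h hb e (a - b) b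
      refine ⟨max h' a, χ, hχ, fun x u k hk => ?_⟩
      rw [eχ x u k (by omega)]
      show (∀ t, k - a ≤ t → t ≤ k - b → Sat x u t φ) ↔ _
      constructor
      · intro hG i hi1 hi2
        exact hG (k - i) (by omega) (by omega)
      · intro hG t ht1 ht2
        have : t = k - (k - t) := by omega
        rw [this]
        exact hG (k - t) (by omega) (by omega)
    · refine ⟨b, .top, atom_bool (Or.inl rfl), fun x u k hk => ?_⟩
      show (∀ t, k - a ≤ t → t ≤ k - b → Sat x u t φ) ↔ True
      simp only [iff_true]
      intro t ht1 ht2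
      omega
  | since a b φ₁ φ₂ ih₁ ih₂ =>
    obtain ⟨h₁, ψ₁, hb₁, e₁⟩ := ih₁
    obtain ⟨h₂, ψ₂, hb₂, e₂⟩ := ih₂
    by_cases hab : b ≤ a
    · obtain ⟨h', χ, hχ, eχ⟩ := sinceRange φ₁ φ₂ ψ₁ ψ₂ h₁ h₂ hb₁ hb₂ e₁ e₂ (a - b) b
      refine ⟨max h' a, χ, hχ, fun x u k hk => ?_⟩
      rw [eχ x u k (by omega)]
      show (∃ t, k - a ≤ t ∧ t ≤ k - b ∧ Sat x u t φ₂ ∧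
        ∀ s, t ≤ s → s ≤ k - b → Sat x u s φ₁) ↔ _
      constructor
      · rintro ⟨t, ht1, ht2, ht3, ht4⟩
        refine ⟨k - t, by omega, by omega, ?_, fun i hi1 hi2 => ?_⟩
        · have : k - (k - t) = t := by omega
          rwa [this]
        · exact ht4 (k - i) (by omega) (by omega)
      · rintro ⟨j, hj1, hj2, hj3, hj4⟩
        refine ⟨k - j, by omega, by omega, hj3, fun s hs1 hs2 => ?_⟩
        have : s = k - (k - s) := by omega
        rw [this]
        exact hj4 (k - s) (by omega) (by omega)
    · refine ⟨b, .not .top, IsBool.not (atom_bool (Or.inl rfl)), fun x u k hk => ?_⟩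
      show (∃ t, k - a ≤ t ∧ t ≤ k - b ∧ _) ↔ ¬ Sat x u k ptSTL.top
      show _ ↔ ¬ True
      simp only [not_true, iff_false]
      rintro ⟨t, ht1, ht2, _⟩
      omega

/-- Distributing `or` over CNFs. -/
lemma cnf_or {c₁ : ptSTL n m} (h₁ : IsCNF c₁) : ∀ {c₂ : ptSTL n m}, IsCNF c₂ →
    ∃ c, IsCNF c ∧ ∀ x u k, (Sat x u k c ↔ (Sat x u k c₁ ∨ Sat x u k c₂)) := by
  induction h₁ with
  | @clause φ hφ =>
    intro c₂ h₂
    induction h₂ with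
    | @clause φ' hφ' =>
      exact ⟨.or φ φ', IsCNF.clause (IsClause.or hφ hφ'), fun x u k => Iff.rfl⟩
    | @and ψ₁ ψ₂ hψ₁ hψ₂ ih₁ ih₂ =>
      obtain ⟨d₁, hd₁, e₁⟩ := ih₁
      obtain ⟨d₂, hd₂, e₂⟩ := ih₂
      refine ⟨.and d₁ d₂, IsCNF.and hd₁ hd₂, fun x u k => ?_⟩
      show Sat x u k d₁ ∧ Sat x u k d₂ ↔ _ ∨ (Sat x u k ψ₁ ∧ Sat x u k ψ₂)
      rw [e₁ x u k, e₂ x u k]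
      tauto
  | @and ψ₁ ψ₂ hψ₁ hψ₂ ih₁ ih₂ =>
    intro c₂ h₂
    obtain ⟨d₁, hd₁, e₁⟩ := ih₁ h₂
    obtain ⟨d₂, hd₂, e₂⟩ := ih₂ h₂
    refine ⟨.and d₁ d₂, IsCNF.and hd₁ hd₂, fun x u k => ?_⟩
    show Sat x u k d₁ ∧ Sat x u k d₂ ↔ (Sat x u k ψ₁ ∧ Sat x u k ψ₂) ∨ _
    rw [e₁ x u k, e₂ x u k]
    tauto

/-- Every Boolean combination of literals, and its negation, have CNF forms. -/
lemma bool_to_cnf {ψ : ptSTL n m} (hb : IsBool ψ) :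
    ∃ (h : ℕ) (c d : ptSTL n m), IsCNF c ∧ IsCNF d ∧ ∀ x u k, h ≤ k →
      ((Sat x u k ψ ↔ Sat x u k c) ∧ (¬ Sat x u k ψ ↔ Sat x u k d)) := by
  induction hb with
  | @lit φ hl =>
    obtain ⟨N, α, hα, hc⟩ := hl
    rcases hc with h | h
    · refine ⟨N, φ, Xpow N (.not α), IsCNF.clause (IsClause.lit ⟨N, α, hα, Or.inl h⟩),
        IsCNF.clause (IsClause.lit ⟨N, α, hα, Or.inr rfl⟩), fun x u k hk => ?_⟩
      refine ⟨Iff.rfl, ?_⟩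
      rw [h, sat_xpow, sat_xpow]
      show ¬ (N ≤ k ∧ _) ↔ N ≤ k ∧ ¬ Sat x u (k - N) α
      constructor
      · intro hn; exact ⟨hk, fun h' => hn ⟨hk, h'⟩⟩
      · rintro ⟨_, hn⟩ ⟨_, h'⟩; exact hn h'
    · refine ⟨N, φ, Xpow N α, IsCNF.clause (IsClause.lit ⟨N, α, hα, Or.inr h⟩),
        IsCNF.clause (IsClause.lit ⟨N, α, hα, Or.inl rfl⟩), fun x u k hk => ?_⟩
      refine ⟨Iff.rfl, ?_⟩
      rw [h, sat_xpow, sat_xpow]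
      show ¬ (N ≤ k ∧ ¬ Sat x u (k - N) α) ↔ N ≤ k ∧ Sat x u (k - N) α
      constructor
      · intro hn
        refine ⟨hk, ?_⟩
        by_contra h'
        exact hn ⟨hk, h'⟩
      · rintro ⟨_, hn⟩ ⟨_, h'⟩; exact h' hn
  | @not φ _ ih =>
    obtain ⟨h, c, d, hc, hd, e⟩ := ih
    refine ⟨h, d, c, hd, hc, fun x u k hk => ?_⟩
    obtain ⟨e1, e2⟩ := e x u k hk
    exact ⟨e2, by show ¬¬ _ ↔ _; rw [not_not]; exact e1⟩
  | @and φ₁ φ₂ _ _ ih₁ ih₂ =>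
    obtain ⟨h₁, c₁, d₁, hc₁, hd₁, e₁⟩ := ih₁
    obtain ⟨h₂, c₂, d₂, hc₂, hd₂, e₂⟩ := ih₂
    obtain ⟨d, hd, ed⟩ := cnf_or hd₁ hd₂
    refine ⟨max h₁ h₂, .and c₁ c₂, d, IsCNF.and hc₁ hc₂, hd, fun x u k hk => ?_⟩
    obtain ⟨a1, a2⟩ := e₁ x u k (by omega)
    obtain ⟨b1, b2⟩ := e₂ x u k (by omega)
    constructor
    · show Sat x u k φ₁ ∧ Sat x u k φ₂ ↔ Sat x u k c₁ ∧ Sat x u k c₂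
      rw [a1, b1]
    · show ¬ (Sat x u k φ₁ ∧ Sat x u k φ₂) ↔ _
      rw [ed x u k, ← a2, ← b2]
      tauto
  | @or φ₁ φ₂ _ _ ih₁ ih₂ =>
    obtain ⟨h₁, c₁, d₁, hc₁, hd₁, e₁⟩ := ih₁
    obtain ⟨h₂, c₂, d₂, hc₂, hd₂, e₂⟩ := ih₂
    obtain ⟨c, hc, ec⟩ := cnf_or hc₁ hc₂
    refine ⟨max h₁ h₂, c, .and d₁ d₂, hc, IsCNF.and hd₁ hd₂, fun x u k hk => ?_⟩
    obtain ⟨a1, a2⟩ := e₁ x u k (by omega)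
    obtain ⟨b1, b2⟩ := e₂ x u k (by omega)
    constructor
    · show Sat x u k φ₁ ∨ Sat x u k φ₂ ↔ _
      rw [ec x u k, a1, b1]
    · show ¬ (Sat x u k φ₁ ∨ Sat x u k φ₂) ↔ Sat x u k d₁ ∧ Sat x u k d₂
      rw [← a2, ← b2]
      tauto

end Aux

/-- every ptSTL formula is, at all times `k ≥ h` for some `h`,
equivalent to a conjunctive normal form over shifted atoms. -/
theorem exists_CNF {n m : ℕ} (φ : ptSTL n m) :
    ∃ (h : ℕ) (ψ : ptSTL n m), IsCNF ψ ∧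
      ∀ (x : ℕ → Fin n → ℝ) (u : ℕ → Fin m → ℝ) (k : ℕ), h ≤ k →
        (Sat x u k φ ↔ Sat x u k ψ) := by
  obtain ⟨h₁, ψ, hb, e⟩ := exists_bool φ
  obtain ⟨h₂, c, d, hc, hd, ec⟩ := bool_to_cnf hb
  refine ⟨max h₁ h₂, c, hc, fun x u k hk => ?_⟩
  rw [e x u k (by omega)]
  exact (ec x u k (by omega)).1
end
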